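/- For β = π_0 π_1 Σ_Z^{-1}(α_1 − α_0), it holds that β^⊤ Σ_Z β = (π_0 π_1)² (α_1 − α_0)^⊤ Σ_Z^{-1}(α_1 − α_0) ≤ π_0 π_1 ≤ 1/4. -/

import Mathlib

open Matrix

lemma vecMulVec_mulVec' {K : ℕ} (d x : Fin K → ℝ) :
    vecMulVec d d *ᵥ x = (d ⬝ᵥ x) • d := by
  funext i
  simp [vecMulVec, mulVec, dotProduct, Finset.mul_sum, mul_comm, mul_left_comm]

/-- For `β = π_0 π_1 Σ_Z⁻¹(α_1-α_0)`, it holds that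
`βᵀ Σ_Z β = (π_0π_1)² (α_1-α_0)ᵀ Σ_Z⁻¹ (α_1-α_0) ≤ π_0 π_1 ≤ 1/4`. -/
theorem beta_sigmaZ_norm {K : ℕ}
    (S : Matrix (Fin K) (Fin K) ℝ) (hS : S.PosDef)
    (α0 α1 : Fin K → ℝ)
    (π0 π1 : ℝ) (hπ0 : 0 < π0) (hπ1 : 0 < π1) (hsum : π0 + π1 = 1)
    (SigmaZ : Matrix (Fin K) (Fin K) ℝ)
    (hSigmaZ : SigmaZ = S + (π0 * π1) • vecMulVec (α1 - α0) (α1 - α0))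
    (β : Fin K → ℝ)
    (hβ : β = (π0 * π1) • (SigmaZ⁻¹ *ᵥ (α1 - α0))) :
    β ⬝ᵥ (SigmaZ *ᵥ β)
        = (π0 * π1) ^ 2 * ((α1 - α0) ⬝ᵥ (SigmaZ⁻¹ *ᵥ (α1 - α0))) ∧
      β ⬝ᵥ (SigmaZ *ᵥ β) ≤ π0 * π1 ∧ π0 * π1 ≤ 1 / 4 := by
  set c : ℝ := π0 * π1 with hc
  have hcpos : 0 < c := mul_pos hπ0 hπ1
  set d : Fin K → ℝ := α1 - α0 with hd
  -- SigmaZ is PosDef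
  have hpd : SigmaZ.PosDef := by
    refine Matrix.posDef_iff_dotProduct_mulVec.mpr ⟨?_, ?_⟩
    · rw [hSigmaZ]
      refine hS.1.add ?_
      show (c • vecMulVec d d)ᴴ = c • vecMulVec d d
      ext i j
      simp [vecMulVec, conjTranspose, transpose, mul_comm]
    · intro x hx
      have h1 := hS.dotProduct_mulVec_pos hx
      rw [hSigmaZ, add_mulVec, smul_mulVec, vecMulVec_mulVec', dotProduct_add]
      have h2 : star x ⬝ᵥ c • ((d ⬝ᵥ x) • d) = c * ((d ⬝ᵥ x) * (d ⬝ᵥ x)) := by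
        simp [dotProduct_smul, dotProduct_comm d x, mul_assoc]
      rw [h2]
      nlinarith [mul_nonneg (le_of_lt hcpos) (mul_self_nonneg (d ⬝ᵥ x))]
  have hdet : IsUnit SigmaZ.det := hpd.det_pos.ne'.isUnit
  have hinv : SigmaZ * SigmaZ⁻¹ = 1 := Matrix.mul_nonsing_inv _ hdet
  set u : Fin K → ℝ := SigmaZ⁻¹ *ᵥ d with hu
  have hSu : SigmaZ *ᵥ u = d := by
    rw [hu, Matrix.mulVec_mulVec, hinv, Matrix.one_mulVec]
  -- main identity
  have hmain : β ⬝ᵥ (SigmaZ *ᵥ β) = c ^ 2 * (d ⬝ᵥ u) := by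
    rw [hβ]
    rw [Matrix.mulVec_smul, hSu]
    simp only [smul_dotProduct, dotProduct_smul, smul_eq_mul]
    rw [dotProduct_comm u d]
    ring
  -- quadratic form expansion
  have hquad : d ⬝ᵥ u = u ⬝ᵥ (S *ᵥ u) + c * (d ⬝ᵥ u) ^ 2 := by
    conv_lhs => rw [← hSu]
    rw [hSigmaZ]
    simp only [add_mulVec, smul_mulVec, vecMulVec_mulVec', add_dotProduct,
      smul_dotProduct, smul_eq_mul]
    rw [dotProduct_comm (S *ᵥ u) u]
    ring
  have hSnn : 0 ≤ u ⬝ᵥ (S *ᵥ u) := by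
    have := hS.posSemidef.dotProduct_mulVec_nonneg u
    simpa using this
  set t : ℝ := d ⬝ᵥ u
  have htnn : 0 ≤ t := by nlinarith [sq_nonneg t]
  have hct : c * t ≤ 1 := by nlinarith [sq_nonneg (c * t - 1)]
  refine ⟨hmain, ?_, ?_⟩
  · rw [hmain]
    nlinarith
  · nlinarith [sq_nonneg (π0 - π1)]
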